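/- Let $\mu$ be the uniform probability measure on the quarter disk $X = \{(x_1,x_2) : x_1, x_2 > 0,\ x_1^2 + x_2^2 < 1\}$ (with density $4/\pi$), let $Y = (0,\bar y)$ with $\bar y \leq \pi/2$, and let $c(x,y) = -(x_1 \cos y + x_2 \sin y)$. Then for all $0 < y_0 < y_1 < \bar y$ and all admissible $k_0$, the minimal mass difference satisfies $D^{min}_\mu(y_0,y_1,k_0) \leq \frac{2}{\pi}(y_1 - y_0)$; equivalently, the $\mu$-measure of the wedge $X_{\geq}(y_1,0) \setminus X_{\geq}(y_0,0)$ equals $\frac{2}{\pi}(y_1 - y_0)$ and dominates $D^{min}_\mu(y_0,y_1,k_0)$. -/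

import Mathlib

open MeasureTheory Set Real

noncomputable section

/-- The quarter disk. -/
def quarterDisk : Set (ℝ × ℝ) :=
  {x : ℝ × ℝ | 0 < x.1 ∧ 0 < x.2 ∧ x.1 ^ 2 + x.2 ^ 2 < 1}

/-- Super-level set `X_{≥}(y,k)` of `∂_y c(x,y) = x₁ sin y - x₂ cos y` within the quarter disk. -/
def XgeQD (y k : ℝ) : Set (ℝ × ℝ) :=
  {x ∈ quarterDisk | k ≤ x.1 * Real.sin y - x.2 * Real.cos y}

/-- `k_max(y₀,y₁,k₀)`. -/
def kmaxQD (y0 y1 k0 : ℝ) : ℝ :=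
  sSup {k : ℝ | XgeQD y0 k0 ⊆ XgeQD y1 k}

/-- The uniform probability measure (density `4/π`) on the quarter disk. -/
def muQD : Measure (ℝ × ℝ) :=
  (ENNReal.ofReal (4 / Real.pi)) • (volume.restrict quarterDisk)

/-- Minimal mass difference for the quarter-disk model. -/
def DminQD (y0 y1 k0 : ℝ) : ENNReal :=
  muQD (XgeQD y1 (kmaxQD y0 y1 k0) \ XgeQD y0 k0)

/-! ### Auxiliary lemmas -/

lemma measurableSet_quarterDisk : MeasurableSet quarterDisk := by
  have h : quarterDisk = {x : ℝ × ℝ | 0 < x.1} ∩ ({x : ℝ × ℝ | 0 < x.2} ∩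
      {x : ℝ × ℝ | x.1 ^ 2 + x.2 ^ 2 < 1}) := rfl
  rw [h]
  exact ((isOpen_lt continuous_const continuous_fst).measurableSet).inter
    (((isOpen_lt continuous_const continuous_snd).measurableSet).inter
      ((isOpen_lt (by fun_prop) continuous_const).measurableSet))

lemma measurableSet_XgeQD (y k : ℝ) : MeasurableSet (XgeQD y k) := by
  have h : XgeQD y k = quarterDisk ∩
      {x : ℝ × ℝ | k ≤ x.1 * Real.sin y - x.2 * Real.cos y} := rfl
  rw [h]
  exact measurableSet_quarterDisk.inter
    (measurableSet_le measurable_const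
      (by fun_prop : Measurable fun x : ℝ × ℝ => x.1 * Real.sin y - x.2 * Real.cos y))

/-- The wedge set with apex `P`. -/
def wedgeQD (y0 y1 : ℝ) (P : ℝ × ℝ) : Set (ℝ × ℝ) :=
  {q : ℝ × ℝ | P + q ∈ quarterDisk ∧ 0 ≤ q.1 * Real.sin y1 - q.2 * Real.cos y1 ∧
    q.1 * Real.sin y0 - q.2 * Real.cos y0 < 0}

lemma measurableSet_wedgeQD (y0 y1 : ℝ) (P : ℝ × ℝ) : MeasurableSet (wedgeQD y0 y1 P) := by
  have h1 : MeasurableSet {q : ℝ × ℝ | P + q ∈ quarterDisk} :=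
    (measurable_const_add P) measurableSet_quarterDisk
  have h2 : MeasurableSet {q : ℝ × ℝ | 0 ≤ q.1 * Real.sin y1 - q.2 * Real.cos y1} :=
    measurableSet_le measurable_const (by fun_prop)
  have h3 : MeasurableSet {q : ℝ × ℝ | q.1 * Real.sin y0 - q.2 * Real.cos y0 < 0} :=
    measurableSet_lt (by fun_prop) measurable_const
  exact h1.inter (h2.inter h3)

/-- The wedge conditions force both relative coordinates to be positive. -/
lemma wedge_coords {y0 y1 : ℝ} (hy0 : 0 < y0) (h01 : y0 < y1) (hy1 : y1 < π / 2)
    {q : ℝ × ℝ} (h1 : 0 ≤ q.1 * Real.sin y1 - q.2 * Real.cos y1)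
    (h0 : q.1 * Real.sin y0 - q.2 * Real.cos y0 < 0) :
    0 < q.1 ∧ 0 < q.2 := by
  have hc0 : 0 < Real.cos y0 := Real.cos_pos_of_mem_Ioo ⟨by linarith [pi_pos], by linarith⟩
  have hc1 : 0 < Real.cos y1 := Real.cos_pos_of_mem_Ioo ⟨by linarith [pi_pos], hy1⟩
  have hs0 : 0 < Real.sin y0 := Real.sin_pos_of_pos_of_lt_pi hy0 (by linarith [pi_pos])
  have hs1 : 0 < Real.sin y1 := Real.sin_pos_of_pos_of_lt_pi (by linarith) (by linarith [pi_pos])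
  have hsd : 0 < Real.sin (y1 - y0) :=
    Real.sin_pos_of_pos_of_lt_pi (by linarith) (by linarith [pi_pos])
  rw [Real.sin_sub] at hsd
  have hq1 : 0 < q.1 := by nlinarith
  refine ⟨hq1, ?_⟩
  nlinarith

set_option maxHeartbeats 1000000 in
/-- Volume bound (and exact value when `P = 0`) for the wedge. -/
lemma wedge_volume {y0 y1 : ℝ} (hy0 : 0 < y0) (h01 : y0 < y1) (hy1 : y1 < π / 2)
    (P : ℝ × ℝ) (hP1 : 0 ≤ P.1) (hP2 : 0 ≤ P.2) :
    volume (wedgeQD y0 y1 P) ≤ ENNReal.ofReal ((y1 - y0) / 2) ∧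
    (P = 0 → volume (wedgeQD y0 y1 P) = ENNReal.ofReal ((y1 - y0) / 2)) := by
  have hc0 : 0 < Real.cos y0 := Real.cos_pos_of_mem_Ioo ⟨by linarith [pi_pos], by linarith⟩
  have hc1 : 0 < Real.cos y1 := Real.cos_pos_of_mem_Ioo ⟨by linarith [pi_pos], hy1⟩
  have hs0 : 0 < Real.sin y0 := Real.sin_pos_of_pos_of_lt_pi hy0 (by linarith [pi_pos])
  have hs1 : 0 < Real.sin y1 := Real.sin_pos_of_pos_of_lt_pi (by linarith) (by linarith [pi_pos])
  set S := wedgeQD y0 y1 P with hSdef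
  set A : Set (ℝ × ℝ) := Ioo (0:ℝ) 1 ×ˢ Ioc y0 y1 with hAdef
  have hSm : MeasurableSet S := measurableSet_wedgeQD y0 y1 P
  have hAm : MeasurableSet A := measurableSet_Ioo.prod measurableSet_Ioc
  have hSsub : S ⊆ Ioo (0:ℝ) 1 ×ˢ Ioo (0:ℝ) 1 := by
    rintro q ⟨hqd, h1, h0⟩
    obtain ⟨hq1, hq2⟩ := wedge_coords hy0 h01 hy1 h1 h0
    have hlt := hqd.2.2
    have hA1 : 0 ≤ P.1 * q.1 := mul_nonneg hP1 hq1.le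
    have hA2 : 0 ≤ P.2 * q.2 := mul_nonneg hP2 hq2.le
    simp only [Prod.fst_add, Prod.snd_add] at hlt
    exact ⟨⟨hq1, by nlinarith [sq_nonneg P.1, sq_nonneg P.2]⟩,
      ⟨hq2, by nlinarith [sq_nonneg P.1, sq_nonneg P.2]⟩⟩
  have hfin : volume S ≠ ⊤ := by
    refine ne_top_of_le_ne_top ?_ (measure_mono hSsub)
    rw [Measure.volume_eq_prod, Measure.prod_prod]
    simp [Real.volume_Ioo]
  have hAfin : volume A ≠ ⊤ := by
    rw [Measure.volume_eq_prod, hAdef, Measure.prod_prod]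
    simp [Real.volume_Ioo, Real.volume_Ioc]
  -- key pointwise implication
  have key : ∀ p ∈ polarCoord.target, polarCoord.symm p ∈ S → p ∈ A := by
    rintro ⟨s, β⟩ ⟨hs, hβ⟩ hmem
    simp only [mem_Ioi] at hs
    simp only [mem_Ioo] at hβ
    obtain ⟨hqd, h1, h0⟩ := hmem
    simp only [polarCoord_symm_apply] at hqd h1 h0
    obtain ⟨hq1, hq2⟩ :=
      wedge_coords (q := (s * Real.cos β, s * Real.sin β)) hy0 h01 hy1 h1 h0
    simp only at hq1 hq2
    have hcβ : 0 < Real.cos β := by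
      by_contra h
      push_neg at h
      nlinarith [mul_nonpos_of_nonneg_of_nonpos hs.le h]
    have hsβ : 0 < Real.sin β := by
      by_contra h
      push_neg at h
      nlinarith [mul_nonpos_of_nonneg_of_nonpos hs.le h]
    have hβ0 : 0 < β := by
      by_contra h
      push_neg at h
      have h2 := Real.sin_nonneg_of_nonneg_of_le_pi (x := -β) (by linarith) (by linarith)
      rw [Real.sin_neg] at h2
      linarith
    have hβπ : β < π / 2 := by
      by_contra h
      push_neg at h
      have h2 := Real.cos_nonpos_of_pi_div_two_le_of_le h (by linarith [pi_pos])
      linarith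
    have hmem0 : β ∈ Ioo (-(π/2)) (π/2) := ⟨by linarith [pi_pos], hβπ⟩
    have hmemy0 : y0 ∈ Ioo (-(π/2)) (π/2) := ⟨by linarith [pi_pos], by linarith⟩
    have hmemy1 : y1 ∈ Ioo (-(π/2)) (π/2) := ⟨by linarith [pi_pos], hy1⟩
    have htan0 : Real.tan y0 < Real.tan β := by
      rw [Real.tan_eq_sin_div_cos, Real.tan_eq_sin_div_cos, div_lt_div_iff₀ hc0 hcβ]
      nlinarith
    have htan1 : Real.tan β ≤ Real.tan y1 := by
      rw [Real.tan_eq_sin_div_cos, Real.tan_eq_sin_div_cos, div_le_div_iff₀ hcβ hc1]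
      nlinarith
    have hβy0 : y0 < β := (Real.strictMonoOn_tan.lt_iff_lt hmemy0 hmem0).mp htan0
    have hβy1 : β ≤ y1 := (Real.strictMonoOn_tan.le_iff_le hmem0 hmemy1).mp htan1
    have hlt := hqd.2.2
    simp only [Prod.fst_add, Prod.snd_add] at hlt
    have hid : (s * Real.cos β) ^ 2 + (s * Real.sin β) ^ 2 = s ^ 2 := by
      have hpy := Real.sin_sq_add_cos_sq β
      calc (s * Real.cos β) ^ 2 + (s * Real.sin β) ^ 2
          = s ^ 2 * (Real.sin β ^ 2 + Real.cos β ^ 2) := by ring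
        _ = s ^ 2 := by rw [hpy]; ring
    have hslt : s < 1 := by
      nlinarith [hid, mul_nonneg hP1 hq1.le, mul_nonneg hP2 hq2.le,
        sq_nonneg P.1, sq_nonneg P.2]
    exact ⟨⟨hs, hslt⟩, hβy0, hβy1⟩
  -- converse when P = 0
  have key0 : P = 0 → ∀ p ∈ polarCoord.target, p ∈ A → polarCoord.symm p ∈ S := by
    rintro rfl ⟨s, β⟩ _ ⟨hsI, hβI⟩
    simp only [mem_Ioo] at hsI
    simp only [mem_Ioc] at hβI
    obtain ⟨hs, hs1'⟩ := hsI
    obtain ⟨hβ1, hβ2⟩ := hβI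
    have hcβ : 0 < Real.cos β := Real.cos_pos_of_mem_Ioo ⟨by linarith [pi_pos], by linarith⟩
    have hsβ : 0 < Real.sin β := Real.sin_pos_of_pos_of_lt_pi (by linarith) (by linarith [pi_pos])
    have hsin1 : 0 ≤ Real.sin (y1 - β) :=
      Real.sin_nonneg_of_nonneg_of_le_pi (by linarith) (by linarith [pi_pos])
    have hsin0 : Real.sin (y0 - β) < 0 :=
      Real.sin_neg_of_neg_of_neg_pi_lt (by linarith) (by linarith [pi_pos])
    rw [Real.sin_sub] at hsin1 hsin0
    have hid : (s * Real.cos β) ^ 2 + (s * Real.sin β) ^ 2 = s ^ 2 := by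
      have h := Real.sin_sq_add_cos_sq β
      calc (s * Real.cos β) ^ 2 + (s * Real.sin β) ^ 2
          = s ^ 2 * (Real.sin β ^ 2 + Real.cos β ^ 2) := by ring
        _ = s ^ 2 := by rw [h]; ring
    refine ⟨?_, ?_, ?_⟩
    · simp only [polarCoord_symm_apply, zero_add]
      refine ⟨?_, ?_, ?_⟩
      · simpa using mul_pos hs hcβ
      · simpa using mul_pos hs hsβ
      · simp only
        nlinarith [hid]
    · simp only [polarCoord_symm_apply]
      nlinarith
    · simp only [polarCoord_symm_apply]
      nlinarith
  -- the comparison integrand and its integral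
  have hsubA : A ⊆ polarCoord.target := by
    rintro ⟨s, β⟩ ⟨h1, h2⟩
    simp only [mem_Ioo, mem_Ioc] at h1 h2
    refine ⟨h1.1, ⟨?_, ?_⟩⟩
    · show -π < β
      linarith [pi_pos, h2.1]
    · show β < π
      linarith [pi_pos, h2.2]
  have hIoo_half : (∫ x in Ioo (0:ℝ) 1, x) = 1/2 := by
    rw [← MeasureTheory.integral_Ioc_eq_integral_Ioo,
      ← intervalIntegral.integral_of_le (by norm_num : (0:ℝ) ≤ 1)]
    rw [integral_id]
    norm_num
  have hIoc_one : (∫ _ in Ioc y0 y1, (1:ℝ)) = y1 - y0 := by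
    rw [setIntegral_const, measureReal_def, Real.volume_Ioc, smul_eq_mul, mul_one,
      ENNReal.toReal_ofReal (by linarith)]
  have Ieq : (∫ p in polarCoord.target, A.indicator (fun p : ℝ × ℝ => p.1) p) = (y1 - y0)/2 := by
    rw [integral_indicator hAm, Measure.restrict_restrict hAm,
      inter_eq_self_of_subset_left hsubA]
    rw [hAdef, Measure.volume_eq_prod, ← Measure.prod_restrict]
    have hprod := MeasureTheory.integral_prod_mul (μ := volume.restrict (Ioo (0:ℝ) 1))
      (ν := volume.restrict (Ioc y0 y1)) (fun x : ℝ => x) (fun _ : ℝ => (1:ℝ))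
    simp only [mul_one] at hprod
    rw [hprod, hIoo_half, hIoc_one]
    ring
  have hgint : Integrable (A.indicator fun p : ℝ × ℝ => p.1)
      (volume.restrict polarCoord.target) := by
    have h1 : IntegrableOn (fun p : ℝ × ℝ => p.1) A volume := by
      refine Measure.integrableOn_of_bounded (M := 1) hAfin
        (continuous_fst.aestronglyMeasurable) ?_
      filter_upwards [ae_restrict_mem hAm] with p hp
      have := hp.1
      simp only [mem_Ioo] at this
      rw [Real.norm_eq_abs, abs_le]
      constructor <;> linarith [this.1, this.2]
    exact (h1.integrable_indicator hAm).restrict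
  have htarget_m : MeasurableSet polarCoord.target := polarCoord.open_target.measurableSet
  have hle : ∀ p ∈ polarCoord.target,
      p.1 • S.indicator (1 : ℝ × ℝ → ℝ) (polarCoord.symm p) ≤
        A.indicator (fun p : ℝ × ℝ => p.1) p := by
    intro p hp
    by_cases h : polarCoord.symm p ∈ S
    · rw [indicator_of_mem h, indicator_of_mem (key p hp h)]
      simp [smul_eq_mul]
    · rw [indicator_of_notMem h]
      rw [smul_zero]
      exact indicator_nonneg (fun q hq => (hq.1.1).le) p
  have hmain : (volume S).toReal = ∫ p in polarCoord.target,
      p.1 • S.indicator (1 : ℝ × ℝ → ℝ) (polarCoord.symm p) := by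
    rw [← measureReal_def, ← integral_indicator_one hSm, ← integral_comp_polarCoord_symm]
  constructor
  · rw [ENNReal.le_ofReal_iff_toReal_le hfin (by linarith)]
    rw [hmain, ← Ieq]
    refine integral_mono_of_nonneg ?_ hgint ?_
    · refine (ae_restrict_iff' htarget_m).mpr (ae_of_all _ fun p hp => ?_)
      exact smul_nonneg (le_of_lt hp.1) (indicator_nonneg (fun _ _ => zero_le_one) _)
    · refine (ae_restrict_iff' htarget_m).mpr (ae_of_all _ fun p hp => ?_)
      exact hle p hp
  · intro hP0
    have heq : (volume S).toReal = (y1 - y0)/2 := by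
      rw [hmain, ← Ieq]
      refine setIntegral_congr_fun htarget_m (fun p hp => ?_)
      by_cases h : polarCoord.symm p ∈ S
      · rw [indicator_of_mem h, indicator_of_mem (key p hp h)]
        simp [smul_eq_mul]
      · rw [indicator_of_notMem h, smul_zero, indicator_of_notMem]
        intro hpA
        exact h (key0 hP0 p hp hpA)
    rw [← ENNReal.ofReal_toReal hfin, heq]

/-- Auxiliary: the conclusion of part 2 given a suitable apex point. -/
lemma part2_aux {y0 y1 : ℝ} (hy0 : 0 < y0) (h01 : y0 < y1) (hy1 : y1 < π / 2)
    (k0 k1 : ℝ) (P : ℝ × ℝ) (hP1 : 0 ≤ P.1) (hP2 : 0 ≤ P.2)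
    (hf0P : P.1 * Real.sin y0 - P.2 * Real.cos y0 = k0)
    (hf1P : P.1 * Real.sin y1 - P.2 * Real.cos y1 = k1)
    (hk1 : k1 ≤ kmaxQD y0 y1 k0) :
    DminQD y0 y1 k0 ≤ ENNReal.ofReal (2 / Real.pi * (y1 - y0)) := by
  have hsub : XgeQD y1 (kmaxQD y0 y1 k0) \ XgeQD y0 k0 ⊆
      (fun x => x + (-P)) ⁻¹' wedgeQD y0 y1 P := by
    rintro x ⟨⟨hxQD, hxf1⟩, hxn⟩
    have hxf0 : x.1 * Real.sin y0 - x.2 * Real.cos y0 < k0 := by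
      by_contra h
      push_neg at h
      exact hxn ⟨hxQD, h⟩
    refine ⟨?_, ?_, ?_⟩
    · have hPx : P + (x + -P) = x := by abel
      show P + (x + -P) ∈ quarterDisk
      rw [hPx]
      exact hxQD
    · simp only [Prod.fst_add, Prod.snd_add, Prod.fst_neg, Prod.snd_neg]
      linarith
    · simp only [Prod.fst_add, Prod.snd_add, Prod.fst_neg, Prod.snd_neg]
      linarith
  have hmeas : MeasurableSet (XgeQD y1 (kmaxQD y0 y1 k0) \ XgeQD y0 k0) :=
    (measurableSet_XgeQD _ _).diff (measurableSet_XgeQD _ _)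
  calc DminQD y0 y1 k0
      = ENNReal.ofReal (4 / Real.pi) *
        volume ((XgeQD y1 (kmaxQD y0 y1 k0) \ XgeQD y0 k0) ∩ quarterDisk) := by
        rw [DminQD, muQD, Measure.smul_apply, smul_eq_mul, Measure.restrict_apply hmeas]
    _ ≤ ENNReal.ofReal (4 / Real.pi) *
        volume ((fun x => x + (-P)) ⁻¹' wedgeQD y0 y1 P) := by
        gcongr
        exact inter_subset_left.trans hsub
    _ = ENNReal.ofReal (4 / Real.pi) * volume (wedgeQD y0 y1 P) := by
        rw [measure_preimage_add_right]
    _ ≤ ENNReal.ofReal (4 / Real.pi) * ENNReal.ofReal ((y1 - y0)/2) := by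
        gcongr
        exact (wedge_volume hy0 h01 hy1 P hP1 hP2).1
    _ = ENNReal.ofReal (2 / Real.pi * (y1 - y0)) := by
        rw [← ENNReal.ofReal_mul (by positivity)]
        congr 1
        ring

theorem stmt3 (ybar : ℝ) (hybar : ybar ≤ Real.pi / 2)
    (y0 y1 : ℝ) (hy0 : 0 < y0) (hy01 : y0 < y1) (hy1 : y1 < ybar)
    (k0 : ℝ) (hk0 : ∃ x ∈ quarterDisk, x.1 * Real.sin y0 - x.2 * Real.cos y0 = k0) :
    muQD (XgeQD y1 0 \ XgeQD y0 0) = ENNReal.ofReal (2 / Real.pi * (y1 - y0)) ∧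
    DminQD y0 y1 k0 ≤ ENNReal.ofReal (2 / Real.pi * (y1 - y0)) := by
  have hy1pi : y1 < π / 2 := lt_of_lt_of_le hy1 hybar
  have hc0 : 0 < Real.cos y0 := Real.cos_pos_of_mem_Ioo ⟨by linarith [pi_pos], by linarith⟩
  have hc1 : 0 < Real.cos y1 := Real.cos_pos_of_mem_Ioo ⟨by linarith [pi_pos], hy1pi⟩
  have hs0 : 0 < Real.sin y0 := Real.sin_pos_of_pos_of_lt_pi hy0 (by linarith [pi_pos])
  have hs1 : 0 < Real.sin y1 := Real.sin_pos_of_pos_of_lt_pi (by linarith) (by linarith [pi_pos])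
  have hsd : 0 < Real.sin (y1 - y0) :=
    Real.sin_pos_of_pos_of_lt_pi (by linarith) (by linarith [pi_pos])
  rw [Real.sin_sub] at hsd
  constructor
  · -- part 1
    have hset : XgeQD y1 0 \ XgeQD y0 0 = wedgeQD y0 y1 0 := by
      ext x
      simp only [XgeQD, wedgeQD, mem_diff, mem_setOf_eq, zero_add]
      constructor
      · rintro ⟨⟨hq, h1⟩, h2⟩
        refine ⟨hq, h1, ?_⟩
        by_contra h
        push_neg at h
        exact h2 ⟨hq, h⟩
      · rintro ⟨hq, h1, h0⟩
        exact ⟨⟨hq, h1⟩, fun h => absurd h.2 (not_le.mpr h0)⟩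
    have hvol := (wedge_volume hy0 hy01 hy1pi 0 le_rfl le_rfl).2 rfl
    have hsubQD : wedgeQD y0 y1 0 ⊆ quarterDisk := by
      rintro q ⟨hq, _, _⟩
      simpa using hq
    rw [hset, muQD, Measure.smul_apply, smul_eq_mul,
      Measure.restrict_apply (measurableSet_wedgeQD y0 y1 0),
      inter_eq_self_of_subset_left hsubQD, hvol,
      ← ENNReal.ofReal_mul (by positivity)]
    congr 1
    ring
  · -- part 2
    obtain ⟨xs, hxsQD, hxsf⟩ := hk0
    have hbdd : BddAbove {k : ℝ | XgeQD y0 k0 ⊆ XgeQD y1 k} := by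
      refine ⟨xs.1 * Real.sin y1 - xs.2 * Real.cos y1, fun k hk => ?_⟩
      exact (hk ⟨hxsQD, hxsf.ge⟩).2
    rcases le_or_gt 0 k0 with hk0s | hk0s
    · -- apex on the x-axis
      set P : ℝ × ℝ := (k0 / Real.sin y0, 0) with hP
      have hf0P : P.1 * Real.sin y0 - P.2 * Real.cos y0 = k0 := by
        simp only [hP]
        field_simp
        ring
      have hf1P : P.1 * Real.sin y1 - P.2 * Real.cos y1 = k0 * Real.sin y1 / Real.sin y0 := by
        simp only [hP]
        field_simp
        try ring
      have hmem : (k0 * Real.sin y1 / Real.sin y0) ∈ {k : ℝ | XgeQD y0 k0 ⊆ XgeQD y1 k} := by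
        rintro x ⟨hxQD, hxf0⟩
        refine ⟨hxQD, ?_⟩
        rw [div_le_iff₀ hs0]
        have hx2 : 0 ≤ x.2 := hxQD.2.1.le
        nlinarith [mul_nonneg hx2 hsd.le, mul_nonneg (sub_nonneg.mpr hxf0) hs1.le]
      exact part2_aux hy0 hy01 hy1pi k0 _ P (by positivity) le_rfl hf0P hf1P
        (le_csSup hbdd hmem)
    · -- apex on the y-axis
      set P : ℝ × ℝ := (0, -(k0 / Real.cos y0)) with hP
      have hf0P : P.1 * Real.sin y0 - P.2 * Real.cos y0 = k0 := by
        simp only [hP]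
        field_simp
        ring
      have hf1P : P.1 * Real.sin y1 - P.2 * Real.cos y1 = k0 * Real.cos y1 / Real.cos y0 := by
        simp only [hP]
        field_simp
        try ring
      have hmem : (k0 * Real.cos y1 / Real.cos y0) ∈ {k : ℝ | XgeQD y0 k0 ⊆ XgeQD y1 k} := by
        rintro x ⟨hxQD, hxf0⟩
        refine ⟨hxQD, ?_⟩
        rw [div_le_iff₀ hc0]
        have hx1 : 0 ≤ x.1 := hxQD.1.le
        nlinarith [mul_nonneg hx1 hsd.le, mul_nonneg (sub_nonneg.mpr hxf0) hc1.le]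
      refine part2_aux hy0 hy01 hy1pi k0 _ P le_rfl ?_ hf0P hf1P (le_csSup hbdd hmem)
      simp only [hP]
      rw [neg_nonneg]
      exact div_nonpos_of_nonpos_of_nonneg hk0s.le hc0.le

end
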